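/- Let L be a complete enriched Lie algebra and E ⊆ L a sub Lie algebra such that E + L^{(2)} = L, where L^{(2)} is the closure of [L,L]. Then the closure of E equals L. -/

import Mathlib

section EnrichedPre

variable {L : Type*} [LieRing L] [LieAlgebra ℚ L]

/-- `lcsIn A n` is the span of iterated Lie brackets of length `n+1` with entries in `A`
(so `lcsIn ⊤ (k-1)` is the `k`-th term `L^k` of the lower central series). -/
def lcsIn (A : Submodule ℚ L) : ℕ → Submodule ℚ L
  | 0 => A
  | n + 1 => Submodule.span ℚ {z : L | ∃ x ∈ A, ∃ y ∈ lcsIn A n, ⁅x, y⁆ = z}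

/-- The closure of a subspace `S` in an enriched Lie algebra `(L, {I α})`:
the set of limits of coherent families of elements of `S`, i.e. of those `x`
whose image in each `L ⧸ I α` lies in the image of `S`. -/
def encl {ι : Type*} (I : ι → LieIdeal ℚ L) (S : Submodule ℚ L) : Submodule ℚ L where
  carrier := {x : L | ∀ α, ∃ s ∈ S, x - s ∈ (I α : Submodule ℚ L)}
  add_mem' := by
    intro a b ha hb α
    obtain ⟨s, hs, h1⟩ := ha α
    obtain ⟨t, ht, h2⟩ := hb α
    exact ⟨s + t, S.add_mem hs ht, by
      simpa [add_sub_add_comm] using Submodule.add_mem _ h1 h2⟩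
  zero_mem' := fun α => ⟨0, S.zero_mem, by simp⟩
  smul_mem' := by
    intro c a ha α
    obtain ⟨s, hs, h1⟩ := ha α
    exact ⟨c • s, S.smul_mem c hs, by
      simpa [smul_sub] using Submodule.smul_mem _ c h1⟩

/-- `(L, {I α})` is an enriched Lie algebra: a directed family of ideals with
finite-dimensional nilpotent quotients and trivial intersection. -/
def IsEnriched {ι : Type*} (I : ι → LieIdeal ℚ L) : Prop :=
  (∀ α β, ∃ γ, I γ ≤ I α ⊓ I β) ∧
  (∀ α, FiniteDimensional ℚ (L ⧸ I α)) ∧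
  (∀ α, LieRing.IsNilpotent (L ⧸ I α)) ∧
  (⨅ α, I α) = ⊥

/-- Completeness of `(L, {I α})`: every coherent family in `lim_α L/I α`
(presented by compatible representatives) has a limit in `L`. -/
def IsCompleteWrt {ι : Type*} (I : ι → LieIdeal ℚ L) : Prop :=
  ∀ y : ι → L, (∀ α β, I β ≤ I α → y β - y α ∈ (I α : Submodule ℚ L)) →
    ∃ x : L, ∀ α, x - y α ∈ (I α : Submodule ℚ L)

end EnrichedPre
section Aux

variable {L : Type*} [LieRing L] [LieAlgebra ℚ L]

/-- Image of `lcsIn ⊤ n` in a quotient lies in the lower central series. -/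
lemma lcsIn_quot_le (J : LieIdeal ℚ L) (n : ℕ) {x : L} (hx : x ∈ lcsIn (⊤ : Submodule ℚ L) n) :
    LieSubmodule.Quotient.mk (N := J) x ∈
      LieModule.lowerCentralSeries ℚ (L ⧸ J) (L ⧸ J) n := by
  induction n generalizing x with
  | zero => exact LieSubmodule.mem_top _
  | succ n ih =>
    have : lcsIn (⊤ : Submodule ℚ L) (n+1) ≤
        Submodule.comap (LieSubmodule.Quotient.mk' J).toLinearMap
          (LieModule.lowerCentralSeries ℚ (L ⧸ J) (L ⧸ J) (n+1)).toSubmodule := by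
      apply Submodule.span_le.2
      rintro z ⟨a, -, b, hb, rfl⟩
      simp only [SetLike.mem_coe, Submodule.mem_comap, LieModuleHom.coe_toLinearMap,
        LieSubmodule.Quotient.mk'_apply]
      rw [LieSubmodule.Quotient.mk_bracket, LieModule.lowerCentralSeries_succ]
      exact LieSubmodule.lie_mem_lie (LieSubmodule.mem_top _) (ih hb)
    exact this hx

/-- `E ⊔ I α` is closed under brackets. -/
lemma sup_bracket_closed (E : LieSubalgebra ℚ L) (J : LieIdeal ℚ L)
    {x y : L} (hx : x ∈ E.toSubmodule ⊔ (J : Submodule ℚ L))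
    (hy : y ∈ E.toSubmodule ⊔ (J : Submodule ℚ L)) :
    ⁅x, y⁆ ∈ E.toSubmodule ⊔ (J : Submodule ℚ L) := by
  obtain ⟨e, he, i, hi, rfl⟩ := Submodule.mem_sup.1 hx
  obtain ⟨f, hf, j, hj, rfl⟩ := Submodule.mem_sup.1 hy
  have h1 : ⁅e, f⁆ ∈ E.toSubmodule ⊔ (J : Submodule ℚ L) :=
    Submodule.mem_sup_left (E.lie_mem he hf)
  have h2 : ⁅e, j⁆ ∈ (J : Submodule ℚ L) := J.lie_mem hj
  have h3 : ⁅i, f⁆ ∈ (J : Submodule ℚ L) := by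
    have : ⁅f, i⁆ ∈ (J : Submodule ℚ L) := J.lie_mem hi
    rw [← neg_neg ⁅i, f⁆, lie_skew]
    exact Submodule.neg_mem _ this
  have h4 : ⁅i, j⁆ ∈ (J : Submodule ℚ L) := J.lie_mem hj
  have : ⁅e + i, f + j⁆ = ⁅e, f⁆ + (⁅e, j⁆ + ⁅i, f⁆ + ⁅i, j⁆) := by
    simp [lie_add, add_lie]; abel
  rw [this]
  exact Submodule.add_mem _ h1 (Submodule.mem_sup_right
    (Submodule.add_mem _ (Submodule.add_mem _ h2 h3) h4))

end Aux

set_option maxHeartbeats 2000000 in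
/-- If `E` is a sub Lie algebra of a complete enriched Lie algebra `L`
with `E + L^{(2)} = L` (where `L^{(2)}` is the closure of `[L,L]`), then the closure of
`E` is all of `L`. -/
theorem stmt10 {ι L : Type*} [LieRing L] [LieAlgebra ℚ L]
    (I : ι → LieIdeal ℚ L) (hE : IsEnriched I) (hC : IsCompleteWrt I)
    (E : LieSubalgebra ℚ L)
    (h : E.toSubmodule ⊔ encl I (lcsIn (⊤ : Submodule ℚ L) 1) = ⊤) :
    encl I E.toSubmodule = ⊤ := by
  obtain ⟨-, -, hnil, -⟩ := hE
  -- Key claim: for each α, E ⊔ I α = ⊤.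
  have key : ∀ α, E.toSubmodule ⊔ ((I α : LieIdeal ℚ L) : Submodule ℚ L) = ⊤ := by
    intro α
    set J : Submodule ℚ L := E.toSubmodule ⊔ ((I α : LieIdeal ℚ L) : Submodule ℚ L) with hJ
    -- Step 1: J ⊔ lcsIn ⊤ 1 = ⊤
    have base : J ⊔ lcsIn (⊤ : Submodule ℚ L) 1 = ⊤ := by
      rw [eq_top_iff]
      rintro x -
      have hx : x ∈ E.toSubmodule ⊔ encl I (lcsIn (⊤ : Submodule ℚ L) 1) := by rw [h]; trivial
      obtain ⟨e, he, z, hz, rfl⟩ := Submodule.mem_sup.1 hx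
      obtain ⟨s, hs, hi⟩ := hz α
      have : e + z = (e + (z - s)) + s := by abel
      rw [this]
      exact Submodule.add_mem _
        (Submodule.mem_sup_left (Submodule.add_mem _ (Submodule.mem_sup_left he)
          (Submodule.mem_sup_right hi)))
        (Submodule.mem_sup_right hs)
    -- Step 2: induction, J ⊔ lcsIn ⊤ n = ⊤ for all n ≥ 1
    have step : ∀ n, J ⊔ lcsIn (⊤ : Submodule ℚ L) (n + 1) = ⊤ := by
      intro n
      induction n with
      | zero => exact base
      | succ n ih =>
        -- show lcsIn ⊤ 1 ≤ J ⊔ lcsIn ⊤ (n+2)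
        have hle : lcsIn (⊤ : Submodule ℚ L) 1 ≤ J ⊔ lcsIn (⊤ : Submodule ℚ L) (n + 2) := by
          apply Submodule.span_le.2
          rintro z ⟨a, -, b, -, rfl⟩
          have ha : a ∈ J ⊔ lcsIn (⊤ : Submodule ℚ L) (n + 1) := by rw [ih]; trivial
          have hb : b ∈ J ⊔ lcsIn (⊤ : Submodule ℚ L) (n + 1) := by rw [ih]; trivial
          obtain ⟨j1, hj1, c1, hc1, rfl⟩ := Submodule.mem_sup.1 ha
          obtain ⟨j2, hj2, c2, hc2, rfl⟩ := Submodule.mem_sup.1 hb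
          have hC2 : ∀ y : L, ∀ c ∈ lcsIn (⊤ : Submodule ℚ L) (n+1),
              ⁅y, c⁆ ∈ lcsIn (⊤ : Submodule ℚ L) (n+2) :=
            fun y c hc => Submodule.subset_span ⟨y, trivial, c, hc, rfl⟩
          have e1 : ⁅j1, j2⁆ ∈ J := sup_bracket_closed E (I α) hj1 hj2
          have e2 : ⁅j1, c2⁆ ∈ lcsIn (⊤ : Submodule ℚ L) (n+2) := hC2 _ _ hc2
          have e3 : ⁅c1, j2⁆ ∈ lcsIn (⊤ : Submodule ℚ L) (n+2) := by
            rw [← neg_neg ⁅c1, j2⁆, lie_skew]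
            exact Submodule.neg_mem _ (hC2 _ _ hc1)
          have e4 : ⁅c1, c2⁆ ∈ lcsIn (⊤ : Submodule ℚ L) (n+2) := hC2 _ _ hc2
          have : ⁅j1 + c1, j2 + c2⁆ = ⁅j1, j2⁆ + (⁅j1, c2⁆ + ⁅c1, j2⁆ + ⁅c1, c2⁆) := by
            simp [lie_add, add_lie]; abel
          rw [SetLike.mem_coe, this]
          exact Submodule.add_mem _ (Submodule.mem_sup_left e1)
            (Submodule.mem_sup_right (Submodule.add_mem _ (Submodule.add_mem _ e2 e3) e4))
        rw [eq_top_iff]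
        calc (⊤ : Submodule ℚ L) = J ⊔ lcsIn (⊤ : Submodule ℚ L) 1 := base.symm
          _ ≤ J ⊔ lcsIn (⊤ : Submodule ℚ L) (n + 1 + 1) :=
            sup_le le_sup_left hle
    -- Step 3: nilpotency gives lcsIn ⊤ (k+1) ≤ I α
    obtain ⟨k, hk⟩ := (LieModule.isNilpotent_iff ℚ (L ⧸ I α) (L ⧸ I α)).mp (hnil α)
    have hCk : lcsIn (⊤ : Submodule ℚ L) (k + 1) ≤ ((I α : LieIdeal ℚ L) : Submodule ℚ L) := by
      intro x hx
      have h1 := lcsIn_quot_le (I α) (k + 1) hx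
      have h2 : LieModule.lowerCentralSeries ℚ (L ⧸ I α) (L ⧸ I α) (k + 1) ≤
          LieModule.lowerCentralSeries ℚ (L ⧸ I α) (L ⧸ I α) k :=
        LieModule.antitone_lowerCentralSeries ℚ _ _ (Nat.le_succ k)
      have h3 : LieSubmodule.Quotient.mk (N := I α) x = 0 := by
        have := h2 h1
        rw [hk] at this
        simpa using this
      exact (Submodule.Quotient.mk_eq_zero _).1 h3
    rw [eq_top_iff]
    calc (⊤ : Submodule ℚ L) = J ⊔ lcsIn (⊤ : Submodule ℚ L) (k + 1) := (step k).symm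
      _ ≤ J := sup_le le_rfl (hCk.trans le_sup_right)
  rw [eq_top_iff]
  rintro x -
  intro α
  have hx : x ∈ E.toSubmodule ⊔ ((I α : LieIdeal ℚ L) : Submodule ℚ L) := by rw [key α]; trivial
  obtain ⟨s, hs, i, hi, rfl⟩ := Submodule.mem_sup.1 hx
  exact ⟨s, hs, by simpa using hi⟩
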